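/- Let n ∈ {5, 6}. There is no n×n additive-multiplicative magic square of distinct positive integers whose magic product P has the form P = p^s·q·r, where p, q, r are pairwise distinct primes and s is a positive integer. -/

import Mathlib

/-- `A` is an `n × n` additive-multiplicative magic square of pairwise distinct
positive integers, with magic sum `S` and magic product `P`: every row, every
column, and both long diagonals have sum `S` and product `P`. -/
def IsAddMulMagicSquare (n : ℕ) (A : Fin n → Fin n → ℕ) (S P : ℕ) : Prop :=
  (∀ i j, 0 < A i j) ∧
  (Function.Injective fun c : Fin n × Fin n => A c.1 c.2) ∧
  (∀ i, ∑ j, A i j = S) ∧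
  (∀ j, ∑ i, A i j = S) ∧
  (∑ i, A i i = S) ∧
  (∑ i, A i i.rev = S) ∧
  (∀ i, ∏ j, A i j = P) ∧
  (∀ j, ∏ i, A i j = P) ∧
  (∏ i, A i i = P) ∧
  (∏ i, A i i.rev = P)

private lemma dvd_prime_mul_prime {q r u : ℕ} (hq : q.Prime) (hr : r.Prime)
    (h : u ∣ q * r) : u = 1 ∨ u = q ∨ u = r ∨ u = q * r := by
  obtain ⟨d1, d2, h1, h2, rfl⟩ := Nat.dvd_mul.mp h
  rcases hq.eq_one_or_self_of_dvd d1 h1 with rfl | rfl <;>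
    rcases hr.eq_one_or_self_of_dvd d2 h2 with rfl | rfl <;> simp

private lemma not_sq_dvd {p q r : ℕ} (s : ℕ) (hp : p.Prime) (hq : q.Prime) (hr : r.Prime)
    (hqp : q ≠ p) (hqr : q ≠ r) : ¬ q * q ∣ p ^ s * q * r := by
  intro h
  have h1 : q * q ∣ q * (p ^ s * r) := by
    have e : p ^ s * q * r = q * (p ^ s * r) := by ring
    rwa [e] at h
  have h2 : q ∣ p ^ s * r := (mul_dvd_mul_iff_left hq.pos.ne').mp h1
  rcases hq.dvd_mul.mp h2 with h3 | h3
  · exact hqp ((Nat.prime_dvd_prime_iff_eq hq hp).mp (hq.dvd_of_dvd_pow h3))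
  · exact hqr ((Nat.prime_dvd_prime_iff_eq hq hr).mp h3)

private theorem magic_aux {n : ℕ} (hn5 : 5 ≤ n) (A : Fin n → Fin n → ℕ) (S P p q r s : ℕ)
    (hpos : ∀ i j, 0 < A i j)
    (hinj : Function.Injective fun c : Fin n × Fin n => A c.1 c.2)
    (hrowS : ∀ i, ∑ j, A i j = S) (hcolS : ∀ j, ∑ i, A i j = S)
    (hrowP : ∀ i, ∏ j, A i j = P) (hcolP : ∀ j, ∏ i, A i j = P)
    (hp : p.Prime) (hq : q.Prime) (hr : r.Prime)
    (hpq : p ≠ q) (hpr : p ≠ r) (hqr : q ≠ r) (hP : P = p ^ s * q * r) : False := by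
  have hn0 : 0 < n := by omega
  have hA0 : ∀ i j, A i j ≠ 0 := fun i j => (hpos i j).ne'
  set a : Fin n → Fin n → ℕ := fun i j => (A i j).factorization p with ha
  set u : Fin n → Fin n → ℕ := fun i j => A i j / p ^ (A i j).factorization p with hu
  have hdecomp : ∀ i j, p ^ a i j * u i j = A i j := fun i j =>
    Nat.ordProj_mul_ordCompl_eq_self (A i j) p
  have hpu : ∀ i j, ¬ p ∣ u i j := fun i j => Nat.not_dvd_ordCompl hp (hA0 i j)
  have huA : ∀ i j, u i j ∣ A i j := fun i j => Nat.ordCompl_dvd (A i j) p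
  have hAP : ∀ i j, A i j ∣ P := by
    intro i j
    rw [← hrowP i]
    exact Finset.dvd_prod_of_mem _ (Finset.mem_univ j)
  have hudvd : ∀ i j, u i j ∣ q * r := by
    intro i j
    have h1 : u i j ∣ p ^ s * (q * r) := by
      have := (huA i j).trans (hAP i j)
      rwa [hP, mul_assoc] at this
    have hcop : (u i j).Coprime (p ^ s) :=
      Nat.Coprime.pow_right s (Nat.coprime_comm.mp ((Nat.Prime.coprime_iff_not_dvd hp).mpr (hpu i j)))
    exact hcop.dvd_of_dvd_mul_left h1
  have huset : ∀ i j, u i j = 1 ∨ u i j = q ∨ u i j = r ∨ u i j = q * r := fun i j =>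
    dvd_prime_mul_prime hq hr (hudvd i j)
  -- no line has two cells divisible by a fixed prime t with ¬ t*t ∣ P
  have hline2 : ∀ (B : Fin n → ℕ) (t : ℕ), ¬ t * t ∣ P → (∏ k, B k = P) →
      ∀ k₁ k₂, k₁ ≠ k₂ → t ∣ B k₁ → t ∣ B k₂ → False := by
    intro B t hPt hprod k₁ k₂ hne h1 h2
    apply hPt
    rw [← hprod, ← Finset.mul_prod_erase Finset.univ B (Finset.mem_univ k₁),
        ← Finset.mul_prod_erase _ B (Finset.mem_erase.mpr ⟨Ne.symm hne, Finset.mem_univ k₂⟩)]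
    exact mul_dvd_mul h1 (h2.mul_right _)
  have hPq : ¬ q * q ∣ P := by rw [hP]; exact not_sq_dvd s hp hq hr (Ne.symm hpq) hqr
  have hPr : ¬ r * r ∣ P := by
    rw [hP, show p ^ s * q * r = p ^ s * r * q by ring]
    exact not_sq_dvd s hp hr hq (Ne.symm hpr) (Ne.symm hqr)
  -- minimal exponent μ
  obtain ⟨c₀, -, hc₀⟩ := Finset.exists_min_image (Finset.univ : Finset (Fin n × Fin n))
      (fun c => a c.1 c.2) ⟨(⟨0, hn0⟩, ⟨0, hn0⟩), Finset.mem_univ _⟩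
  set μ := a c₀.1 c₀.2 with hμ
  have hmin : ∀ i j, μ ≤ a i j := fun i j => hc₀ (i, j) (Finset.mem_univ _)
  -- two μ-cells with the same label coincide
  have hcell : ∀ i j i' j', a i j = μ → a i' j' = μ → u i j = u i' j' →
      (i, j) = (i', j') := by
    intro i j i' j' h1 h2 h3
    apply hinj
    show A i j = A i' j'
    rw [← hdecomp i j, ← hdecomp i' j', h1, h2, h3]
  -- some row avoids μ entirely
  have hrow0 : ∃ i₀ : Fin n, ∀ j, a i₀ j ≠ μ := by
    by_contra h
    push_neg at h
    choose f hf using h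
    have hinj2 : Function.Injective fun i : Fin n => u i (f i) := by
      intro i i' he
      have := hcell i (f i) i' (f i') (hf i) (hf i') he
      exact (Prod.mk.injEq _ _ _ _ ▸ this).1
    have hsub : ∀ i : Fin n, u i (f i) ∈ ({1, q, r, q * r} : Finset ℕ) := by
      intro i
      rcases huset i (f i) with h' | h' | h' | h' <;> simp [h']
    have hcard := Finset.card_le_card_of_injOn
        (s := (Finset.univ : Finset (Fin n))) (t := ({1, q, r, q * r} : Finset ℕ))
        (fun i : Fin n => u i (f i)) (fun i _ => hsub i) hinj2.injOn
    have h4 : ({1, q, r, q * r} : Finset ℕ).card ≤ 4 := by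
      apply le_trans (Finset.card_insert_le _ _)
      have : ({q, r, q * r} : Finset ℕ).card ≤ 3 := by
        apply le_trans (Finset.card_insert_le _ _)
        have : ({r, q * r} : Finset ℕ).card ≤ 2 := by
          apply le_trans (Finset.card_insert_le _ _)
          simp
        omega
      omega
    rw [Finset.card_univ, Fintype.card_fin] at hcard
    omega
  obtain ⟨i₀, hi₀⟩ := hrow0
  -- p^(μ+1) divides S
  have hpS : p ^ (μ + 1) ∣ S := by
    rw [← hrowS i₀]
    apply Finset.dvd_sum
    intro j _
    have h1 : μ + 1 ≤ a i₀ j := lt_of_le_of_ne (hmin i₀ j) (Ne.symm (hi₀ j))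
    exact (pow_dvd_pow p h1).trans (Nat.ordProj_dvd _ _)
  -- every line containing a μ-cell contains another one
  have hpartner : ∀ (B : Fin n → ℕ), (∀ k, B k ≠ 0) → (∑ k, B k = S) →
      (∀ k, μ ≤ (B k).factorization p) → ∀ k₀, (B k₀).factorization p = μ →
      ∃ k₁, k₁ ≠ k₀ ∧ (B k₁).factorization p = μ := by
    intro B hB0 hBsum hBmin k₀ hk₀
    by_contra hcon
    push_neg at hcon
    have hfilter : Finset.univ.filter (fun k => (B k).factorization p = μ) = {k₀} := by
      ext k
      simp only [Finset.mem_filter, Finset.mem_univ, true_and, Finset.mem_singleton]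
      constructor
      · intro hk
        by_contra hne
        exact hcon k hne hk
      · rintro rfl; exact hk₀
    have hd2 : p ^ (μ + 1) ∣
        ∑ k ∈ Finset.univ.filter (fun k => ¬ (B k).factorization p = μ), B k := by
      apply Finset.dvd_sum
      intro k hk
      simp only [Finset.mem_filter, Finset.mem_univ, true_and] at hk
      have h1 : μ + 1 ≤ (B k).factorization p := lt_of_le_of_ne (hBmin k) (Ne.symm hk)
      exact (pow_dvd_pow p h1).trans (Nat.ordProj_dvd _ _)
    have hsplit := Finset.sum_filter_add_sum_filter_not Finset.univ
        (fun k => (B k).factorization p = μ) B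
    have hSd : p ^ (μ + 1) ∣
        (∑ k ∈ Finset.univ.filter (fun k => (B k).factorization p = μ), B k) +
        ∑ k ∈ Finset.univ.filter (fun k => ¬ (B k).factorization p = μ), B k := by
      rw [hsplit, hBsum]; exact hpS
    have hd1 : p ^ (μ + 1) ∣
        ∑ k ∈ Finset.univ.filter (fun k => (B k).factorization p = μ), B k := by
      rw [add_comm (∑ k ∈ Finset.univ.filter (fun k => (B k).factorization p = μ), B k)
        (∑ k ∈ Finset.univ.filter (fun k => ¬ (B k).factorization p = μ), B k)] at hSd
      exact (Nat.dvd_add_right hd2).mp hSd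
    rw [hfilter, Finset.sum_singleton] at hd1
    have hdec : p ^ μ * (B k₀ / p ^ (B k₀).factorization p) = B k₀ := by
      conv_lhs => rw [← hk₀]
      exact Nat.ordProj_mul_ordCompl_eq_self (B k₀) p
    rw [← hdec, pow_succ] at hd1
    have hfinal : p ∣ B k₀ / p ^ (B k₀).factorization p :=
      (mul_dvd_mul_iff_left (pow_ne_zero μ hp.pos.ne')).mp hd1
    exact Nat.not_dvd_ordCompl hp (hB0 k₀) hfinal
  have hrowPartner : ∀ i j₀, a i j₀ = μ → ∃ j₁, j₁ ≠ j₀ ∧ a i j₁ = μ := by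
    intro i j₀ h
    exact hpartner (fun j => A i j) (fun j => hA0 i j) (hrowS i) (fun j => hmin i j) j₀ h
  have hcolPartner : ∀ j i₀', a i₀' j = μ → ∃ i₁, i₁ ≠ i₀' ∧ a i₁ j = μ := by
    intro j i₀' h
    exact hpartner (fun i => A i j) (fun i => hA0 i j) (hcolS j) (fun i => hmin i j) i₀' h
  -- main case analysis
  by_cases hcase : ∃ x : Fin n × Fin n, a x.1 x.2 = μ ∧ u x.1 x.2 = q * r
  · obtain ⟨⟨x1, x2⟩, hxa, hxu⟩ := hcase
    have hqA : q ∣ A x1 x2 := by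
      refine dvd_trans ?_ (huA x1 x2)
      rw [hxu]; exact Dvd.intro r rfl
    have hrA : r ∣ A x1 x2 := by
      refine dvd_trans ?_ (huA x1 x2)
      rw [hxu]; exact Dvd.intro_left q rfl
    obtain ⟨y2, hy2ne, hya⟩ := hrowPartner x1 x2 hxa
    obtain ⟨z1, hz1ne, hza⟩ := hcolPartner x2 x1 hxa
    have hyu : u x1 y2 = 1 := by
      rcases huset x1 y2 with h' | h' | h' | h'
      · exact h'
      · exfalso
        have hd : q ∣ A x1 y2 := by rw [← h']; exact huA x1 y2
        exact hline2 (fun j => A x1 j) q hPq (hrowP x1) y2 x2 hy2ne hd hqA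
      · exfalso
        have hd : r ∣ A x1 y2 := by rw [← h']; exact huA x1 y2
        exact hline2 (fun j => A x1 j) r hPr (hrowP x1) y2 x2 hy2ne hd hrA
      · exfalso
        have hd : q ∣ A x1 y2 := by
          refine dvd_trans (Dvd.intro r rfl) ?_
          rw [← h']; exact huA x1 y2
        exact hline2 (fun j => A x1 j) q hPq (hrowP x1) y2 x2 hy2ne hd hqA
    have hzu : u z1 x2 = 1 := by
      rcases huset z1 x2 with h' | h' | h' | h'
      · exact h'
      · exfalso
        have hd : q ∣ A z1 x2 := by rw [← h']; exact huA z1 x2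
        exact hline2 (fun i => A i x2) q hPq (hcolP x2) z1 x1 hz1ne hd hqA
      · exfalso
        have hd : r ∣ A z1 x2 := by rw [← h']; exact huA z1 x2
        exact hline2 (fun i => A i x2) r hPr (hcolP x2) z1 x1 hz1ne hd hrA
      · exfalso
        have hd : q ∣ A z1 x2 := by
          refine dvd_trans (Dvd.intro r rfl) ?_
          rw [← h']; exact huA z1 x2
        exact hline2 (fun i => A i x2) q hPq (hcolP x2) z1 x1 hz1ne hd hqA
    have heq := hcell x1 y2 z1 x2 hya hza (hyu.trans hzu.symm)
    have : x1 = z1 := (Prod.mk.injEq _ _ _ _ ▸ heq).1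
    exact hz1ne this.symm
  · push_neg at hcase
    have hxa : a c₀.1 c₀.2 = μ := rfl
    obtain ⟨y2, hy2ne, hya⟩ := hrowPartner c₀.1 c₀.2 hxa
    obtain ⟨z1, hz1ne, hza⟩ := hcolPartner c₀.2 c₀.1 hxa
    obtain ⟨w1, hw1ne, hwa⟩ := hcolPartner y2 c₀.1 hya
    -- labels of the four μ-cells lie in {1, q, r}
    have L : ∀ (i j : Fin n), a i j = μ → u i j = 1 ∨ u i j = q ∨ u i j = r := by
      intro i j hij
      rcases huset i j with h' | h' | h' | h'
      · exact Or.inl h'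
      · exact Or.inr (Or.inl h')
      · exact Or.inr (Or.inr h')
      · exact absurd h' (hcase (i, j) hij)
    -- pairwise distinct labels
    have dxy : u c₀.1 c₀.2 ≠ u c₀.1 y2 := by
      intro h
      have := hcell c₀.1 c₀.2 c₀.1 y2 hxa hya h
      exact hy2ne ((Prod.mk.injEq _ _ _ _ ▸ this).2).symm
    have dxz : u c₀.1 c₀.2 ≠ u z1 c₀.2 := by
      intro h
      have := hcell c₀.1 c₀.2 z1 c₀.2 hxa hza h
      exact hz1ne ((Prod.mk.injEq _ _ _ _ ▸ this).1).symm
    have dxw : u c₀.1 c₀.2 ≠ u w1 y2 := by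
      intro h
      have := hcell c₀.1 c₀.2 w1 y2 hxa hwa h
      exact hy2ne ((Prod.mk.injEq _ _ _ _ ▸ this).2).symm
    have dyz : u c₀.1 y2 ≠ u z1 c₀.2 := by
      intro h
      have := hcell c₀.1 y2 z1 c₀.2 hya hza h
      exact hz1ne ((Prod.mk.injEq _ _ _ _ ▸ this).1).symm
    have dyw : u c₀.1 y2 ≠ u w1 y2 := by
      intro h
      have := hcell c₀.1 y2 w1 y2 hya hwa h
      exact hw1ne ((Prod.mk.injEq _ _ _ _ ▸ this).1).symm
    have dzw : u z1 c₀.2 ≠ u w1 y2 := by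
      intro h
      have := hcell z1 c₀.2 w1 y2 hza hwa h
      exact hy2ne ((Prod.mk.injEq _ _ _ _ ▸ this).2).symm
    have hq1 : q ≠ 1 := hq.ne_one
    have hr1 : r ≠ 1 := hr.ne_one
    rcases L c₀.1 c₀.2 hxa with h1 | h1 | h1 <;>
      rcases L c₀.1 y2 hya with h2 | h2 | h2 <;>
        rcases L z1 c₀.2 hza with h3 | h3 | h3 <;>
          rcases L w1 y2 hwa with h4 | h4 | h4 <;>
            first
              | exact dxy (h1.trans h2.symm)
              | exact dxz (h1.trans h3.symm)
              | exact dxw (h1.trans h4.symm)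
              | exact dyz (h2.trans h3.symm)
              | exact dyw (h2.trans h4.symm)
              | exact dzw (h3.trans h4.symm)

/-- No 5×5 or 6×6 additive-multiplicative magic square of distinct positive
integers has a magic product of the form `p^s * q * r` with `p, q, r` pairwise
distinct primes and `s ≥ 1`. -/
theorem no_magic_square_with_product_p_pow_q_r
    (n : ℕ) (hn : n = 5 ∨ n = 6) :
    ¬ ∃ (A : Fin n → Fin n → ℕ) (S P : ℕ) (p q r s : ℕ),
      IsAddMulMagicSquare n A S P ∧ p.Prime ∧ q.Prime ∧ r.Prime ∧
      p ≠ q ∧ p ≠ r ∧ q ≠ r ∧ 1 ≤ s ∧ P = p ^ s * q * r := by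
  rintro ⟨A, S, P, p, q, r, s,
    ⟨hpos, hinj, hrowS, hcolS, -, -, hrowP, hcolP, -, -⟩,
    hp, hq, hr, hpq, hpr, hqr, -, hP⟩
  have hn5 : 5 ≤ n := by rcases hn with rfl | rfl <;> norm_num
  exact magic_aux hn5 A S P p q r s hpos hinj hrowS hcolS hrowP hcolP
    hp hq hr hpq hpr hqr hP
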